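/- For the function f(t,x) := log(√(1 + ((x+1)/t)²) - (x+1)/t) - (x²/(t·c(x)) - (x+1)²/(t·c(x+1))), where c(x) = 2(1 - 1/(x+1)), one has ∂ₓ f(t,x) ≥ 0 and ∂ₜ f(t,0) ≤ 0 for all t, x ≥ 0, and consequently f(t,x) ≥ 0 for all t > 0, x ≥ 0. -/

import Mathlib

noncomputable def cAux (x : ℝ) : ℝ := 2 * (1 - 1 / (x + 1))

noncomputable def fAux (t x : ℝ) : ℝ :=
  Real.log (Real.sqrt (1 + ((x + 1) / t) ^ 2) - (x + 1) / t)
    - (x ^ 2 / (t * cAux x) - (x + 1) ^ 2 / (t * cAux (x + 1)))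

noncomputable def gAux (u : ℝ) : ℝ := Real.log (Real.sqrt (1 + u ^ 2) - u) + u

lemma sqrt_pos_aux (u : ℝ) : 0 < Real.sqrt (1 + u ^ 2) - u := by
  have h1 : (0:ℝ) ≤ 1 + u ^ 2 := by positivity
  have h2 := Real.sq_sqrt h1
  have h3 := Real.sqrt_nonneg (1 + u ^ 2)
  nlinarith [sq_nonneg (Real.sqrt (1 + u ^ 2) - u), sq_nonneg (Real.sqrt (1 + u ^ 2) + u)]

lemma one_le_S (u : ℝ) : 1 ≤ Real.sqrt (1 + u ^ 2) := by
  have h1 : (0:ℝ) ≤ 1 + u ^ 2 := by positivity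
  nlinarith [Real.sq_sqrt h1, Real.sqrt_nonneg (1 + u ^ 2), sq_nonneg u]

lemma gAux_hasDeriv (u : ℝ) :
    HasDerivAt gAux (1 - 1 / Real.sqrt (1 + u ^ 2)) u := by
  have hS1 : 1 ≤ Real.sqrt (1 + u ^ 2) := one_le_S u
  have hS0 : Real.sqrt (1 + u ^ 2) ≠ 0 := by linarith
  have hSu : Real.sqrt (1 + u ^ 2) - u ≠ 0 := (sqrt_pos_aux u).ne'
  have h1 : HasDerivAt (fun v : ℝ => 1 + v ^ 2) (2 * u) u := by
    simpa using ((hasDerivAt_pow 2 u).const_add 1)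
  have h2 : HasDerivAt (fun v : ℝ => Real.sqrt (1 + v ^ 2))
      (1 / (2 * Real.sqrt (1 + u ^ 2)) * (2 * u)) u :=
    (Real.hasDerivAt_sqrt (by positivity)).comp u h1
  have h3 : HasDerivAt (fun v : ℝ => Real.sqrt (1 + v ^ 2) - v)
      (1 / (2 * Real.sqrt (1 + u ^ 2)) * (2 * u) - 1) u := h2.sub (hasDerivAt_id u)
  have h4 := (h3.log hSu).add (hasDerivAt_id u)
  refine h4.congr_deriv ?_
  field_simp
  ring


lemma gAux_zero : gAux 0 = 0 := by norm_num [gAux]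

lemma gAux_mono : Monotone gAux := by
  have hd : ∀ u : ℝ, 0 ≤ deriv gAux u := by
    intro u
    rw [(gAux_hasDeriv u).deriv]
    have h1 : 1 ≤ Real.sqrt (1 + u ^ 2) := one_le_S u
    have : 1 / Real.sqrt (1 + u ^ 2) ≤ 1 := by
      rw [div_le_one (by linarith)]; exact h1
    linarith
  exact monotone_of_deriv_nonneg (fun u => (gAux_hasDeriv u).differentiableAt) hd

lemma fAux_eq (t x : ℝ) (ht : t ≠ 0) (hx : -1 < x) :
    fAux t x = gAux ((x + 1) / t) := by
  have hx1 : x + 1 ≠ 0 := by linarith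
  have hx2 : x + 2 ≠ 0 := by linarith
  unfold fAux gAux cAux
  have hc : ∀ y : ℝ, y + 1 ≠ 0 → 2 * (1 - 1 / (y + 1)) = 2 * y / (y + 1) := by
    intro y hy; field_simp; ring
  rcases eq_or_ne x 0 with rfl | hx0
  · norm_num
  · have hx2' : x + 1 + 1 ≠ 0 := by intro h; apply hx2; linarith
    rw [sub_eq_add_neg]
    congr 1
    rw [hc x hx1, hc (x + 1) hx2']
    field_simp
    ring

theorem fAux_properties :
    (∀ t x : ℝ, 0 < t → 0 ≤ x → 0 ≤ deriv (fun y => fAux t y) x) ∧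
    (∀ t : ℝ, 0 < t → deriv (fun s => fAux s 0) t ≤ 0) ∧
    (∀ t x : ℝ, 0 < t → 0 ≤ x → 0 ≤ fAux t x) := by
  refine ⟨?_, ?_, ?_⟩
  · intro t x ht hx
    have hev : (fun y => fAux t y) =ᶠ[nhds x] fun y => gAux ((y + 1) / t) := by
      filter_upwards [isOpen_Ioi.mem_nhds (show (-1:ℝ) < x by linarith)] with y hy
      exact fAux_eq t y ht.ne' hy
    rw [hev.deriv_eq]
    have hinner : HasDerivAt (fun y : ℝ => (y + 1) / t) (1 / t) x := by
      simpa using ((hasDerivAt_id x).add_const 1).div_const t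
    have h : HasDerivAt (fun y => gAux ((y + 1) / t))
        ((1 - 1 / Real.sqrt (1 + ((x + 1) / t) ^ 2)) * (1 / t)) x := by
      exact (gAux_hasDeriv ((x + 1) / t)).comp x hinner
    rw [h.deriv]
    have h1 : 1 ≤ Real.sqrt (1 + ((x + 1) / t) ^ 2) := one_le_S _
    have h2 : 1 / Real.sqrt (1 + ((x + 1) / t) ^ 2) ≤ 1 := by
      rw [div_le_one (by linarith)]; exact h1
    have : (0:ℝ) ≤ 1 / t := by positivity
    nlinarith
  · intro t ht
    have hev : (fun s => fAux s 0) =ᶠ[nhds t] fun s => gAux ((0 + 1) / s) := by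
      filter_upwards [isOpen_Ioi.mem_nhds (show (0:ℝ) < t from ht)] with s hs
      exact fAux_eq s 0 (ne_of_gt hs) (by norm_num)
    rw [hev.deriv_eq]
    have hinner : HasDerivAt (fun s : ℝ => (0 + 1) / s) (-(t ^ 2)⁻¹) t := by
      simpa using (hasDerivAt_inv ht.ne')
    have h : HasDerivAt (fun s => gAux ((0 + 1) / s))
        ((1 - 1 / Real.sqrt (1 + ((0 + 1) / t) ^ 2)) * -(t ^ 2)⁻¹) t :=
      (gAux_hasDeriv ((0 + 1) / t)).comp t hinner
    rw [h.deriv]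
    have h1 : 1 ≤ Real.sqrt (1 + ((0 + 1) / t) ^ 2) := one_le_S _
    have h2 : 1 / Real.sqrt (1 + ((0 + 1) / t) ^ 2) ≤ 1 := by
      rw [div_le_one (by linarith)]; exact h1
    have h3 : (0:ℝ) ≤ (t ^ 2)⁻¹ := by positivity
    nlinarith
  · intro t x ht hx
    rw [fAux_eq t x ht.ne' (by linarith)]
    have : gAux 0 ≤ gAux ((x + 1) / t) := gAux_mono (by positivity)
    rwa [gAux_zero] at this
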